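/- (Prime filter theorem for ≺) Let S be a ∨-semilattice with minimum 0 and a relation ≺ that is distributive and auxiliary. If I ⊆ S is an ideal and F ⊆ S is a round filter with I ∩ F = ∅, then F extends to a round prime filter P ⊇ F with I ∩ P = ∅. -/

import Mathlib

variable {S : Type*} [SemilatticeSup S] [OrderBot S]

/-- A (nonempty) filter: an up-set in which any two elements have a common lower bound. -/
def IsFilt (F : Set S) : Prop :=
  F.Nonempty ∧ (∀ p ∈ F, ∀ q, p ≤ q → q ∈ F) ∧
    ∀ p ∈ F, ∀ q ∈ F, ∃ t ∈ F, t ≤ p ∧ t ≤ q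

/-- A filter is round if every member has a `r`-predecessor in the filter. -/
def IsRound (r : S → S → Prop) (F : Set S) : Prop :=
  ∀ p ∈ F, ∃ t ∈ F, r t p

/-- Primeness: `p ⊔ q ∈ P` implies `p ∈ P` or `q ∈ P`. -/
def IsPrimeFilt (P : Set S) : Prop :=
  ∀ p q, p ⊔ q ∈ P → p ∈ P ∨ q ∈ P

/-- The spectrum: proper round prime filters. -/
def Spec (r : S → S → Prop) : Type _ :=
  {P : Set S // IsFilt P ∧ IsRound r P ∧ IsPrimeFilt P ∧ ⊥ ∉ P}

/-- The basic open set `Ŝ_p`. -/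
def basicOpen (r : S → S → Prop) (p : S) : Set (Spec r) :=
  {P | p ∈ P.1}

instance specTop (r : S → S → Prop) : TopologicalSpace (Spec r) :=
  TopologicalSpace.generateFrom (Set.range (basicOpen r))

/-- Distributivity of `r`. -/
def IsDistrib (r : S → S → Prop) : Prop :=
  ∀ p s t, r p (s ⊔ t) → ∀ p', r p' p →
    ∃ s' t', r s' s ∧ r t' t ∧ p' ≤ s' ⊔ t' ∧ s' ⊔ t' ≤ p

/-- `r` is auxiliary. -/
def IsAux (r : S → S → Prop) : Prop :=
  (∀ p p' q' q, p ≤ p' → r p' q' → q' ≤ q → r p q) ∧ ∀ p q, r p q → p ≤ q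

/-- `r` is interpolative. -/
def IsInterp (r : S → S → Prop) : Prop :=
  ∀ p q, r p q → ∃ s, r p s ∧ r s q

/-- `r` is approximating: `≤` is the lower preorder of `r`. -/
def IsApprox (r : S → S → Prop) : Prop :=
  ∀ p q, p ≤ q ↔ ∀ t, r t p → r t q

/-- `r` is `∨`-preserving. -/
def IsSupPres (r : S → S → Prop) : Prop :=
  ∀ p p' q q', r p' p → r q' q → r (p' ⊔ q') (p ⊔ q)

/-- `S` with `r` is a `∨`-predomain. -/
def IsPredom (r : S → S → Prop) : Prop :=
  IsAux r ∧ IsApprox r ∧ IsInterp r ∧ IsSupPres r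

/-- Ideal: downward closed and closed under pairwise joins. -/
def IsIdl (I : Set S) : Prop :=
  (∀ p ∈ I, ∀ q, q ≤ p → q ∈ I) ∧ ∀ p ∈ I, ∀ q ∈ I, p ⊔ q ∈ I
theorem stmt8 (r : S → S → Prop) (hd : IsDistrib r) (ha : IsAux r)
    (I F : Set S) (hI : IsIdl I) (hF : IsFilt F) (hR : IsRound r F)
    (hdis : I ∩ F = ∅) :
    ∃ P, F ⊆ P ∧ IsFilt P ∧ IsRound r P ∧ IsPrimeFilt P ∧ I ∩ P = ∅ := by
  classical
  have hdis' : ∀ x, x ∈ I → x ∈ F → False := by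
    intro x hxI hxF
    have : x ∈ I ∩ F := ⟨hxI, hxF⟩
    simp [hdis] at this
  by_cases hbot : (⊥ : S) ∈ F
  · -- then F = univ, I = ∅, take P = univ
    have hFuniv : ∀ x : S, x ∈ F := fun x => hF.2.1 ⊥ hbot x bot_le
    refine ⟨Set.univ, fun x _ => trivial, ⟨⟨⊥, trivial⟩, fun _ _ _ _ => trivial,
      fun p _ q _ => ⟨⊥, trivial, bot_le, bot_le⟩⟩, ?_, fun p q _ => Or.inl trivial, ?_⟩
    · intro p _
      obtain ⟨t, _, ht⟩ := hR p (hFuniv p)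
      exact ⟨t, trivial, ht⟩
    · ext x
      simp only [Set.mem_inter_iff, Set.mem_empty_iff_false, iff_false, not_and]
      intro hxI _
      exact (hdis' x hxI (hFuniv x)).elim
  · -- main case
    set I' : Set S := I ∪ {⊥} with hI'def
    have hI'idl : IsIdl I' := by
      constructor
      · rintro p (hp | hp) q hq
        · exact Or.inl (hI.1 p hp q hq)
        · simp only [Set.mem_singleton_iff] at hp
          subst hp
          exact Or.inr (le_bot_iff.mp hq)
      · rintro p (hp | hp) q (hq | hq)
        · exact Or.inl (hI.2 p hp q hq)
        · simp only [Set.mem_singleton_iff] at hq; subst hq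
          rw [sup_bot_eq]; exact Or.inl hp
        · simp only [Set.mem_singleton_iff] at hp; subst hp
          rw [bot_sup_eq]; exact Or.inl hq
        · simp only [Set.mem_singleton_iff] at hp hq; subst hp; subst hq
          show (⊥:S) ⊔ ⊥ ∈ I'
          rw [sup_idem]
          exact Or.inr rfl
    have hI'dis : ∀ x, x ∈ I' → x ∈ F → False := by
      rintro x (hx | hx) hxF
      · exact hdis' x hx hxF
      · simp only [Set.mem_singleton_iff] at hx; subst hx; exact hbot hxF
    -- Zorn
    obtain ⟨J, hIJ, hJmax⟩ := zorn_subset_nonempty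
      {K : Set S | IsIdl K ∧ ∀ x, x ∈ K → x ∈ F → False}
      (by
        intro c hc hchain hcne
        refine ⟨⋃₀ c, ⟨⟨?_, ?_⟩, ?_⟩, fun s hs => Set.subset_sUnion_of_mem hs⟩
        · rintro p ⟨K, hK, hpK⟩ q hq
          exact ⟨K, hK, (hc hK).1.1 p hpK q hq⟩
        · rintro p ⟨K, hK, hpK⟩ q ⟨L, hL, hqL⟩
          rcases hchain.total hK hL with h | h
          · exact ⟨L, hL, (hc hL).1.2 p (h hpK) q hqL⟩
          · exact ⟨K, hK, (hc hK).1.2 p hpK q (h hqL)⟩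
        · rintro x ⟨K, hK, hxK⟩ hxF
          exact (hc hK).2 x hxK hxF)
      I' ⟨hI'idl, hI'dis⟩
    obtain ⟨⟨hJidl, hJdis⟩, hJmax⟩ := hJmax
    have hbotJ : (⊥ : S) ∈ J := hIJ (Or.inr rfl)
    -- maximality consequence
    have key : ∀ p, p ∉ J → ∃ f ∈ F, ∃ j ∈ J, f ≤ j ⊔ p := by
      intro p hp
      by_contra hcon
      push_neg at hcon
      have hKidl : IsIdl {x : S | ∃ j ∈ J, x ≤ j ⊔ p} := by
        constructor
        · rintro x ⟨j, hj, hx⟩ q hq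
          exact ⟨j, hj, hq.trans hx⟩
        · rintro x ⟨j1, hj1, hx⟩ y ⟨j2, hj2, hy⟩
          refine ⟨j1 ⊔ j2, hJidl.2 j1 hj1 j2 hj2, ?_⟩
          refine sup_le (hx.trans ?_) (hy.trans ?_)
          · exact sup_le_sup_right le_sup_left p
          · exact sup_le_sup_right le_sup_right p
      have hKF : ∀ x, x ∈ {x : S | ∃ j ∈ J, x ≤ j ⊔ p} → x ∈ F → False := by
        rintro x ⟨j, hj, hx⟩ hxF
        exact hcon x hxF j hj hx
      have hJK : J ⊆ {x : S | ∃ j ∈ J, x ≤ j ⊔ p} :=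
        fun x hx => ⟨x, hx, le_sup_left⟩
      have := hJmax ⟨hKidl, hKF⟩ hJK
      exact hp (this ⟨⊥, hbotJ, by simp⟩)
    -- P := complement of J
    refine ⟨Jᶜ, ?_, ⟨?_, ?_, ?_⟩, ?_, ?_, ?_⟩
    · exact fun x hxF hxJ => hJdis x hxJ hxF
    · obtain ⟨f, hf⟩ := hF.1
      exact ⟨f, fun hfJ => hJdis f hfJ hf⟩
    · intro p hp q hpq hq
      exact hp (hJidl.1 q hq p hpq)
    · -- common lower bound: the four-fold distribution argument
      intro p hp q hq
      obtain ⟨f, hfF, j1, hj1, hfle⟩ := key p hp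
      obtain ⟨g, hgF, j2, hj2, hgle⟩ := key q hq
      obtain ⟨h, hhF, hhf, hhg⟩ := hF.2.2 f hfF g hgF
      set j : S := j1 ⊔ j2 with hjdef
      have hjJ : j ∈ J := hJidl.2 j1 hj1 j2 hj2
      have hhp : h ≤ j ⊔ p := hhf.trans (hfle.trans (sup_le_sup_right le_sup_left p))
      have hhq : h ≤ j ⊔ q := hhg.trans (hgle.trans (sup_le_sup_right le_sup_right q))
      obtain ⟨h1, h1F, rh1⟩ := hR h hhF
      obtain ⟨h2, h2F, rh2⟩ := hR h1 h1F
      obtain ⟨h3, h3F, rh3⟩ := hR h2 h2F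
      obtain ⟨h4, h4F, rh4⟩ := hR h3 h3F
      obtain ⟨h5, h5F, rh5⟩ := hR h4 h4F
      obtain ⟨h6, h6F, rh6⟩ := hR h5 h5F
      -- step 1: decompose h1 ≺ j ⊔ p
      have s1 : r h1 (j ⊔ p) := ha.1 h1 h1 h (j ⊔ p) le_rfl rh1 hhp
      obtain ⟨a, u, rau_a, rau_u, hle1, hle1'⟩ := hd h1 j p s1 h2 rh2
      have haJ : a ∈ J := hJidl.1 j hjJ a (ha.2 a j rau_a)
      have hup : u ≤ p := ha.2 u p rau_u
      -- step 2: decompose h3 ≺ a ⊔ u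
      have s2 : r h3 (a ⊔ u) := ha.1 h3 h3 h2 (a ⊔ u) le_rfl rh3 hle1
      obtain ⟨a1, u1, ra1, ru1, hle2, hle2'⟩ := hd h3 a u s2 h4 rh4
      have ha1J : a1 ∈ J := hJidl.1 a haJ a1 (ha.2 a1 a ra1)
      -- step 3: decompose h5 ≺ a1 ⊔ u1 to get u2 ≺ u1 with u2 ∉ J
      have s3 : r h5 (a1 ⊔ u1) := ha.1 h5 h5 h4 (a1 ⊔ u1) le_rfl rh5 hle2
      obtain ⟨a2, u2, ra2, ru2, hle3, hle3'⟩ := hd h5 a1 u1 s3 h6 rh6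
      have ha2J : a2 ∈ J := hJidl.1 a1 ha1J a2 (ha.2 a2 a1 ra2)
      have hu2J : u2 ∉ J := by
        intro hu2
        exact hJdis h6 (hJidl.1 (a2 ⊔ u2) (hJidl.2 a2 ha2J u2 hu2) h6 hle3) h6F
      -- step 4: decompose u1 ≺ j ⊔ q with witness u2
      have huq : u ≤ j ⊔ q := le_sup_right.trans (hle1'.trans ((ha.2 h1 h rh1).trans hhq))
      have s4 : r u1 (j ⊔ q) := ha.1 u1 u1 u (j ⊔ q) le_rfl ru1 huq
      obtain ⟨s', t', rs', rt', hle4, hle4'⟩ := hd u1 j q s4 u2 ru2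
      have hs'J : s' ∈ J := hJidl.1 j hjJ s' (ha.2 s' j rs')
      refine ⟨t', ?_, ?_, ha.2 t' q rt'⟩
      · intro ht'
        exact hu2J (hJidl.1 (s' ⊔ t') (hJidl.2 s' hs'J t' ht') u2 hle4)
      · exact le_sup_right.trans (hle4'.trans ((ha.2 u1 u ru1).trans hup))
    · -- roundness of P
      intro p hp
      obtain ⟨f, hfF, j, hjJ, hfle⟩ := key p hp
      obtain ⟨h1, h1F, rh1⟩ := hR f hfF
      obtain ⟨h2, h2F, rh2⟩ := hR h1 h1F
      have s1 : r h1 (j ⊔ p) := ha.1 h1 h1 f (j ⊔ p) le_rfl rh1 hfle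
      obtain ⟨a, u, rau_a, rau_u, hle1, _⟩ := hd h1 j p s1 h2 rh2
      have haJ : a ∈ J := hJidl.1 j hjJ a (ha.2 a j rau_a)
      refine ⟨u, ?_, rau_u⟩
      intro huJ
      exact hJdis h2 (hJidl.1 (a ⊔ u) (hJidl.2 a haJ u huJ) h2 hle1) h2F
    · -- prime
      intro p q hpq
      by_contra hcon
      push_neg at hcon
      simp only [Set.mem_compl_iff, not_not] at hcon
      exact hpq (hJidl.2 p hcon.1 q hcon.2)
    · -- I ∩ Jᶜ = ∅
      ext x
      simp only [Set.mem_inter_iff, Set.mem_compl_iff, Set.mem_empty_iff_false, iff_false, not_and]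
      intro hxI
      simp only [not_not]
      exact hIJ (Or.inl hxI)
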